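/- Let V be a ℤ/2-vector space with a fixed basis, A = T(V) the tensor algebra, ∂ : A → A a derivation with ∂² = 0 and ∂(1) = 0, and let ε₁, ε₂ : A → ℤ/2 be augmentations (unital algebra maps annihilating the image of ∂). Define the linear map L : T(V) → V by L(1) = 0 and L(v₁ ⊗ ⋯ ⊗ v_m) = Σ_{i=1}^m ε₁(v₁)⋯ε₁(v_{i-1}) ε₂(v_{i+1})⋯ε₂(v_m) · v_i on basis words, and set ∂₁^{ε₁,ε₂} := L ∘ ∂|_V : V → V. Then (∂₁^{ε₁,ε₂})² = 0. -/

import Mathlib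

section
variable {ι V : Type*} [AddCommGroup V] [Module (ZMod 2) V]
    (b : Module.Basis ι (ZMod 2) V)
    (ε₁ ε₂ : TensorAlgebra (ZMod 2) V →ₐ[ZMod 2] ZMod 2)
    (L : TensorAlgebra (ZMod 2) V →ₗ[ZMod 2] V)

local notation "A" => TensorAlgebra (ZMod 2) V
local notation "ιA" => TensorAlgebra.ι (ZMod 2)

/-- word -/
noncomputable def ww (l : List ι) : TensorAlgebra (ZMod 2) V :=
  (l.map fun j => TensorAlgebra.ι (ZMod 2) (b j)).prod

variable
    (hL1 : L 1 = 0)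
    (hL : ∀ l : List ι,
      L ((l.map fun j => TensorAlgebra.ι (ZMod 2) (b j))).prod =
        ∑ i : Fin l.length,
          (((l.take i.val).map fun j => ε₁ (TensorAlgebra.ι (ZMod 2) (b j))).prod *
            ((l.drop (i.val + 1)).map fun j => ε₂ (TensorAlgebra.ι (ZMod 2) (b j))).prod)
            • b (l.get i))

include hL in
theorem Lcons (j : ι) (l : List ι) :
    L (ww b (j :: l)) =
      ((l.map fun k => ε₂ (ιA (b k))).prod) • b j
        + ε₁ (ιA (b j)) • L (ww b l) := by
  have h := hL (j :: l)
  rw [ww, h]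
  erw [Fin.sum_univ_succ]
  simp only [Fin.val_zero, List.take_zero, List.map_nil, List.prod_nil, one_mul,
    List.drop_succ_cons, List.drop_zero, List.get_eq_getElem, List.getElem_cons_zero,
    Fin.val_succ, List.take_succ_cons, List.map_cons, List.prod_cons,
    List.getElem_cons_succ]
  congr 1
  simp only [ww]
  rw [hL l, Finset.smul_sum]
  refine Finset.sum_congr rfl fun i _ => ?_
  rw [smul_smul, mul_assoc]
  simp
theorem ww_nil : ww b ([] : List ι) = 1 := by simp [ww]

theorem ww_append (l₁ l₂ : List ι) : ww b (l₁ ++ l₂) = ww b l₁ * ww b l₂ := by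
  simp [ww]

theorem ww_cons (j : ι) (l : List ι) : ww b (j :: l) = ιA (b j) * ww b l := by
  simp [ww]

include hL1 in
theorem Lnil : L (ww b ([] : List ι)) = 0 := by rw [ww_nil]; exact hL1

include hL hL1 in
theorem Lsingle (j : ι) : L (ww b [j]) = b j := by
  rw [Lcons b ε₁ ε₂ L hL, Lnil b L hL1]
  simp

theorem eps_word (ε : TensorAlgebra (ZMod 2) V →ₐ[ZMod 2] ZMod 2) (l : List ι) :
    ε (ww b l) = (l.map fun j => ε (ιA (b j))).prod := by
  rw [ww, map_list_prod, List.map_map]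
  rfl

theorem hspan : ∀ x : TensorAlgebra (ZMod 2) V,
    x ∈ Submodule.span (ZMod 2) (Set.range (ww b)) := by
  intro x
  induction x using TensorAlgebra.induction with
  | algebraMap r =>
      rw [Algebra.algebraMap_eq_smul_one, ← ww_nil b]
      exact Submodule.smul_mem _ _ (Submodule.subset_span ⟨[], rfl⟩)
  | ι v =>
      have hv : v ∈ Submodule.span (ZMod 2) (Set.range b) := by
        rw [b.span_eq]; trivial
      have : ιA v ∈ Submodule.map (TensorAlgebra.ι (ZMod 2))
          (Submodule.span (ZMod 2) (Set.range b)) := ⟨v, hv, rfl⟩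
      rw [Submodule.map_span] at this
      refine Submodule.span_mono ?_ this
      rintro _ ⟨_, ⟨j, rfl⟩, rfl⟩
      exact ⟨[j], by simp [ww]⟩
  | mul x y hx hy =>
      have h := Submodule.mul_mem_mul hx hy
      rw [Submodule.span_mul_span] at h
      refine Submodule.span_le.2 ?_ h
      rintro _ ⟨_, ⟨l₁, rfl⟩, _, ⟨l₂, rfl⟩, rfl⟩
      exact Submodule.subset_span ⟨l₁ ++ l₂, (ww_append b l₁ l₂)⟩
  | add x y hx hy => exact add_mem hx hy
include hL hL1 in
theorem Lsnoc (l : List ι) (j : ι) :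
    L (ww b (l ++ [j])) =
      ((l.map fun k => ε₁ (ιA (b k))).prod) • b j + ε₂ (ιA (b j)) • L (ww b l) := by
  induction l with
  | nil => simp [Lsingle b ε₁ ε₂ L hL1 hL, Lnil b L hL1]
  | cons k l ih =>
      rw [List.cons_append, Lcons b ε₁ ε₂ L hL, ih, Lcons b ε₁ ε₂ L hL]
      simp only [List.map_append, List.prod_append, List.map_cons, List.prod_cons,
        List.map_nil, List.prod_nil, mul_one]
      module

include hL hL1 in
theorem Llet (j : ι) (x : TensorAlgebra (ZMod 2) V) :
    L (x * ιA (b j)) = ε₁ x • b j + ε₂ (ιA (b j)) • L x := by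
  have h := LinearMap.eqOn_span (R := ZMod 2)
    (f := L ∘ₗ LinearMap.mulRight (ZMod 2) (ιA (b j)))
    (g := (ε₁.toLinearMap).smulRight (b j) + ε₂ (ιA (b j)) • L)
    (s := Set.range (ww b)) ?_ (hspan b x)
  · simpa using h
  · rintro _ ⟨l, rfl⟩
    simp only [LinearMap.comp_apply, LinearMap.mulRight_apply, LinearMap.add_apply,
      LinearMap.smulRight_apply, AlgHom.toLinearMap_apply, LinearMap.smul_apply]
    rw [show ww b l * ιA (b j) = ww b (l ++ [j]) by rw [ww_append]; simp [ww]]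
    rw [Lsnoc b ε₁ ε₂ L hL1 hL, eps_word]
include hL hL1 in
theorem Lright (l : List ι) (x : TensorAlgebra (ZMod 2) V) :
    L (x * ww b l) =
      ε₁ x • L (ww b l) + ((l.map fun k => ε₂ (ιA (b k))).prod) • L x := by
  induction l generalizing x with
  | nil => rw [ww_nil, mul_one, hL1]; simp [hL1]
  | cons j l ih =>
      rw [ww_cons, ← mul_assoc, ih, Llet b ε₁ ε₂ L hL1 hL, map_mul, ← ww_cons,
        Lcons b ε₁ ε₂ L hL, List.map_cons, List.prod_cons]
      module

include hL in
theorem Lleft (j : ι) (y : TensorAlgebra (ZMod 2) V) :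
    L (ιA (b j) * y) = ε₁ (ιA (b j)) • L y + ε₂ y • b j := by
  have h := LinearMap.eqOn_span (R := ZMod 2)
    (f := L ∘ₗ LinearMap.mulLeft (ZMod 2) (ιA (b j)))
    (g := ε₁ (ιA (b j)) • L + (ε₂.toLinearMap).smulRight (b j))
    (s := Set.range (ww b)) ?_ (hspan b y)
  · simpa using h
  · rintro _ ⟨l, rfl⟩
    simp only [LinearMap.comp_apply, LinearMap.mulLeft_apply, LinearMap.add_apply,
      LinearMap.smulRight_apply, AlgHom.toLinearMap_apply, LinearMap.smul_apply]
    rw [← ww_cons, Lcons b ε₁ ε₂ L hL, eps_word]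
    abel
variable (D : TensorAlgebra (ZMod 2) V →ₗ[ZMod 2] TensorAlgebra (ZMod 2) V)
    (hLeib : ∀ x y, D (x * y) = D x * y + x * D y)
    (hone : D 1 = 0)
    (hε₁ : ∀ x, ε₁ (D x) = 0) (hε₂ : ∀ x, ε₂ (D x) = 0)

include hL1 hL hLeib hone hε₁ hε₂ in
theorem LDW (l : List ι) :
    L (D (ww b l)) =
      ∑ i : Fin l.length,
        (((l.take i.val).map fun j => ε₁ (ιA (b j))).prod *
          ((l.drop (i.val + 1)).map fun j => ε₂ (ιA (b j))).prod)
          • L (D (ιA (b (l.get i)))) := by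
  induction l with
  | nil => rw [ww_nil, hone, map_zero]; simp
  | cons j l ih =>
      rw [ww_cons, hLeib, map_add, Lright b ε₁ ε₂ L hL1 hL, Lleft b ε₁ ε₂ L hL,
        hε₁, hε₂, zero_smul, zero_smul, zero_add, add_zero, ih]
      erw [Fin.sum_univ_succ]
      simp only [Fin.val_zero, List.take_zero, List.map_nil, List.prod_nil, one_mul,
        List.drop_succ_cons, List.drop_zero, List.get_eq_getElem, List.getElem_cons_zero,
        Fin.val_succ, List.take_succ_cons, List.map_cons, List.prod_cons,
        List.getElem_cons_succ]
      congr 1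
      rw [Finset.smul_sum]
      refine Finset.sum_congr rfl fun i _ => ?_
      rw [smul_smul, mul_assoc]

include hL in
theorem LDiL (l : List ι) :
    L (D (ιA (L (ww b l)))) =
      ∑ i : Fin l.length,
        (((l.take i.val).map fun j => ε₁ (ιA (b j))).prod *
          ((l.drop (i.val + 1)).map fun j => ε₂ (ιA (b j))).prod)
          • L (D (ιA (b (l.get i)))) := by
  rw [show L (ww b l) = ∑ i : Fin l.length,
        (((l.take i.val).map fun j => ε₁ (ιA (b j))).prod *
          ((l.drop (i.val + 1)).map fun j => ε₂ (ιA (b j))).prod) • b (l.get i) from by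
      rw [ww]; exact hL l]
  simp only [map_sum, map_smul]

include hL1 hL hLeib hone hε₁ hε₂ in
theorem keyEq (x : TensorAlgebra (ZMod 2) V) :
    L (D (ιA (L x))) = L (D x) := by
  have h := LinearMap.eqOn_span (R := ZMod 2)
    (f := L ∘ₗ D ∘ₗ (TensorAlgebra.ι (ZMod 2)) ∘ₗ L)
    (g := L ∘ₗ D)
    (s := Set.range (ww b)) ?_ (hspan b x)
  · simpa using h
  · rintro _ ⟨l, rfl⟩
    simp only [LinearMap.comp_apply]
    rw [LDiL b ε₁ ε₂ L hL D, LDW b ε₁ ε₂ L hL1 hL D hLeib hone hε₁ hε₂]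
end





/-- The bilinearized Legendrian-contact-homology differential `∂₁^{ε₁,ε₂} = L ∘ ∂|_V`
of Bourgeois–Chantraine squares to zero. -/
theorem stmt4 {ι V : Type*} [AddCommGroup V] [Module (ZMod 2) V]
    (b : Module.Basis ι (ZMod 2) V)
    (D : TensorAlgebra (ZMod 2) V →ₗ[ZMod 2] TensorAlgebra (ZMod 2) V)
    (hLeib : ∀ x y, D (x * y) = D x * y + x * D y)
    (hsq : ∀ x, D (D x) = 0)
    (hone : D 1 = 0)
    (ε₁ ε₂ : TensorAlgebra (ZMod 2) V →ₐ[ZMod 2] ZMod 2)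
    (hε₁ : ∀ x, ε₁ (D x) = 0) (hε₂ : ∀ x, ε₂ (D x) = 0)
    (L : TensorAlgebra (ZMod 2) V →ₗ[ZMod 2] V)
    (hL1 : L 1 = 0)
    (hL : ∀ l : List ι,
      L ((l.map fun j => TensorAlgebra.ι (ZMod 2) (b j))).prod =
        ∑ i : Fin l.length,
          (((l.take i.val).map fun j => ε₁ (TensorAlgebra.ι (ZMod 2) (b j))).prod *
            ((l.drop (i.val + 1)).map fun j => ε₂ (TensorAlgebra.ι (ZMod 2) (b j))).prod)
            • b (l.get i)) :
    ∀ v : V, L (D (TensorAlgebra.ι (ZMod 2)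
      (L (D (TensorAlgebra.ι (ZMod 2) v))))) = 0 := by
  intro v
  have h := keyEq b ε₁ ε₂ L hL1 hL D hLeib hone hε₁ hε₂
    (D (TensorAlgebra.ι (ZMod 2) v))
  rw [h, hsq, map_zero]
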